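/- Let H be a hypergraph whose edges are all subsets of a set B_S of attributes, and suppose the edge set of H is partitioned into two nonempty parts H1 and H2 whose attribute sets are disjoint, while the full family of edges of a larger hypergraph E ⊇ H is connected and covers B_S. Populate each edge's relation with the two tuples all-0 and all-1 (restricted to its schema). Then the join of the relations of E outputs exactly the two constant tuples (all-0 and all-1 over B_S), while the join of the relations of H outputs, in addition, mixed tuples that are 1 on the attributes of H1 and 0 on the attributes of H2; consequently the join of H produces a tuple dangling with respect to the join of the edges of E not in H. -/
import Mathlib


/-- A tuple `t` agrees with tuple `u` on the attribute set `S`. -/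
def Agrees {α V : Type} (S : Set α) (t u : α → V) : Prop := ∀ a ∈ S, t a = u a

/-- The output of the natural join of the relations `R i` with schemas `sch i`. -/
def JoinOut {ι α V : Type} (sch : ι → Set α) (R : ι → Set (α → V)) : Set (α → V) :=
  { t | ∀ i, ∃ u ∈ R i, Agrees (sch i) t u }

/-- The output of the join of the subfamily of relations indexed by `K`. -/
def SubJoinOut {ι α V : Type} (sch : ι → Set α) (R : ι → Set (α → V)) (K : Set ι) :
    Set (α → V) :=
  { t | ∀ i ∈ K, ∃ u ∈ R i, Agrees (sch i) t u }

/-- A database is fully reduced if every tuple of every relation is the projection of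
some tuple in the full join output. -/
def FullyReduced {ι α V : Type} (sch : ι → Set α) (R : ι → Set (α → V)) : Prop :=
  ∀ i, ∀ u ∈ R i, ∃ t ∈ JoinOut sch R, Agrees (sch i) t u

/-- The boundary attributes of the subjoin indexed by `K`: attributes occurring both in
some relation of the subjoin and in some relation outside it. -/
def Boundary {ι α : Type} (sch : ι → Set α) (K : Set ι) : Set α :=
  (⋃ i ∈ K, sch i) ∩ (⋃ i ∈ Kᶜ, sch i)

/-- `G` is a join tree (parse tree) of the join with relation schemas `sch`. -/
def IsJoinTree {ι α : Type} (G : SimpleGraph ι) (sch : ι → Set α) : Prop :=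
  G.IsTree ∧ ∀ a : α, ∀ i j : ι, a ∈ sch i → a ∈ sch j →
    ∃ p : G.Walk i j, ∀ k ∈ p.support, a ∈ sch k

/-- The node set `K` induces a connected subtree of `G`. -/
def ConnectedIn {ι : Type} (G : SimpleGraph ι) (K : Set ι) : Prop :=
  ∀ i ∈ K, ∀ j ∈ K, ∃ p : G.Walk i j, ∀ k ∈ p.support, k ∈ K

open Classical in
/-- Hypergraph `E` (all indices) is connected and its edges cover `BS`; the subfamily
`K` (the edges of `H`) is partitioned into nonempty parts `K1`, `K2` with disjoint
attribute sets; each edge carries the two constant tuples all-`false` and all-`true`.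
Then the full join outputs exactly the two tuples constant on `BS`; the join of `H`
additionally contains the mixed tuple that is `true` on the attributes of `K1` and
`false` on those of `K2`; and that mixed tuple is dangling with respect to the join
of the edges not in `H`. -/
theorem stmt9 {ι α : Type} (sch : ι → Set α) (BS : Set α)
    (hne : ∀ i, (sch i).Nonempty)
    (hsub : ∀ i, sch i ⊆ BS)
    (hcov : BS ⊆ ⋃ i, sch i)
    (hconn : ∀ i j : ι, Relation.ReflTransGen (fun x y => (sch x ∩ sch y).Nonempty) i j)
    (K K1 K2 : Set ι) (hK : K = K1 ∪ K2) (h1 : K1.Nonempty) (h2 : K2.Nonempty)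
    (hdisj : (⋃ i ∈ K1, sch i) ∩ (⋃ i ∈ K2, sch i) = ∅)
    (R : ι → Set (α → Bool))
    (hR : ∀ i, R i = {u | (∀ a ∈ sch i, u a = false) ∨ (∀ a ∈ sch i, u a = true)}) :
    (∀ t, t ∈ JoinOut sch R ↔
        ((∀ a ∈ BS, t a = false) ∨ (∀ a ∈ BS, t a = true))) ∧
    (fun a => if a ∈ ⋃ i ∈ K1, sch i then true else false) ∈ SubJoinOut sch R K ∧
    (∀ t' ∈ SubJoinOut sch R Kᶜ,
      ¬ Agrees (Boundary sch K)
          (fun a => if a ∈ ⋃ i ∈ K1, sch i then true else false) t') := by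
  classical
  set t₀ : α → Bool := fun a => if a ∈ ⋃ i ∈ K1, sch i then true else false with ht₀
  -- any tuple agreeing with some element of R i is constant on sch i
  have const_of : ∀ (t : α → Bool) (i : ι), (∃ u ∈ R i, Agrees (sch i) t u) →
      (∀ a ∈ sch i, t a = false) ∨ (∀ a ∈ sch i, t a = true) := by
    intro t i ⟨u, hu, hag⟩
    rw [hR] at hu
    rcases hu with hu | hu
    · exact Or.inl fun a ha => (hag a ha).trans (hu a ha)
    · exact Or.inr fun a ha => (hag a ha).trans (hu a ha)
  have hdisj' : ∀ a, a ∈ (⋃ i ∈ K1, sch i) → a ∈ (⋃ i ∈ K2, sch i) → False := by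
    intro a h1' h2'
    have : a ∈ (⋃ i ∈ K1, sch i) ∩ (⋃ i ∈ K2, sch i) := ⟨h1', h2'⟩
    rw [hdisj] at this; exact this
  -- t₀ values
  have ht₀1 : ∀ i ∈ K1, ∀ a ∈ sch i, t₀ a = true := by
    intro i hi a ha
    simp only [ht₀, if_pos (Set.mem_biUnion hi ha)]
  have ht₀2 : ∀ i ∈ K2, ∀ a ∈ sch i, t₀ a = false := by
    intro i hi a ha
    have : a ∉ (⋃ i ∈ K1, sch i) := fun h => hdisj' a h (Set.mem_biUnion hi ha)
    simp only [ht₀, if_neg this]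
  refine ⟨?_, ?_, ?_⟩
  · -- part 1
    intro t
    constructor
    · intro ht
      obtain ⟨i0, hi0⟩ := h1
      obtain ⟨a0, ha0⟩ := hne i0
      -- propagation: value of t on sch j equals value on sch i0
      have prop : ∀ j, ∀ b, (∀ a ∈ sch i0, t a = b) → ∀ a ∈ sch j, t a = b := by
        intro j b hb
        have h := hconn i0 j
        induction h with
        | refl => exact hb
        | tail _ hstep ih =>
          rename_i x y _
          obtain ⟨a, hax, hay⟩ := hstep
          have hxa : t a = b := ih a hax
          rcases const_of t y (ht y) with hc | hc
          · have : b = false := hxa ▸ hc a hay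
            intro a' ha'; rw [hc a' ha', this]
          · have : b = true := hxa ▸ hc a hay
            intro a' ha'; rw [hc a' ha', this]
      rcases const_of t i0 (ht i0) with hc | hc
      · left
        intro a ha
        obtain ⟨j, hj⟩ := Set.mem_iUnion.mp (hcov ha)
        exact prop j false hc a hj
      · right
        intro a ha
        obtain ⟨j, hj⟩ := Set.mem_iUnion.mp (hcov ha)
        exact prop j true hc a hj
    · intro ht i
      refine ⟨t, ?_, fun a _ => rfl⟩
      rw [hR]
      rcases ht with ht | ht
      · exact Or.inl fun a ha => ht a (hsub i ha)
      · exact Or.inr fun a ha => ht a (hsub i ha)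
  · -- part 2
    intro i hi
    rw [hK] at hi
    rcases hi with hi | hi
    · refine ⟨fun _ => true, ?_, ?_⟩
      · rw [hR]; exact Or.inr fun _ _ => rfl
      · exact fun a ha => ht₀1 i hi a ha
    · refine ⟨fun _ => false, ?_, ?_⟩
      · rw [hR]; exact Or.inl fun _ _ => rfl
      · exact fun a ha => ht₀2 i hi a ha
  · -- part 3
    intro t' ht' hag
    obtain ⟨i1, hi1⟩ := h1
    obtain ⟨i2, hi2⟩ := h2
    set g : ι → (α → Bool) := fun x => if x ∈ K then t₀ else t' with hg
    -- g x is constant on sch x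
    have gK : ∀ x ∈ K, g x = t₀ := by intro x hx; simp [hg, if_pos hx]
    have gKc : ∀ x, x ∉ K → g x = t' := by intro x hx; simp [hg, if_neg hx]
    have gconst : ∀ x, (∀ a ∈ sch x, g x a = false) ∨ (∀ a ∈ sch x, g x a = true) := by
      intro x
      by_cases hx : x ∈ K
      · rw [gK x hx]
        rw [hK] at hx
        rcases hx with hx | hx
        · exact Or.inr (ht₀1 x hx)
        · exact Or.inl (ht₀2 x hx)
      · rw [gKc x hx]
        exact const_of t' x (ht' x hx)
    -- crossing: if a ∈ sch x ∩ sch y then g x a = g y a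
    have cross : ∀ x y a, a ∈ sch x → a ∈ sch y → g x a = g y a := by
      intro x y a hax hay
      by_cases hx : x ∈ K <;> by_cases hy : y ∈ K
      · rw [gK x hx, gK y hy]
      · rw [gK x hx, gKc y hy]
        exact hag a ⟨Set.mem_biUnion hx hax, Set.mem_biUnion hy hay⟩
      · rw [gKc x hx, gK y hy]
        exact (hag a ⟨Set.mem_biUnion hy hay, Set.mem_biUnion hx hax⟩).symm
      · rw [gKc x hx, gKc y hy]
    -- propagation of "true" along connectivity from i1 to i2
    have prop : ∀ a ∈ sch i2, g i2 a = true := by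
      have h := hconn i1 i2
      have base : ∀ a ∈ sch i1, g i1 a = true := by
        intro a ha
        rw [gK i1 (hK ▸ Or.inl hi1)]
        exact ht₀1 i1 hi1 a ha
      clear hi2
      induction h with
      | refl => exact base
      | tail _ hstep ih =>
        rename_i x y _
        obtain ⟨a, hax, hay⟩ := hstep
        have h1' : g x a = true := ih a hax
        have h2' : g y a = true := (cross x y a hax hay) ▸ h1'
        rcases gconst y with hc | hc
        · rw [hc a hay] at h2'; exact absurd h2' (by simp)
        · exact hc
    obtain ⟨a, ha⟩ := hne i2
    have := prop a ha
    rw [gK i2 (hK ▸ Or.inr hi2), ht₀2 i2 hi2 a ha] at this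
    exact absurd this (by simp)
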